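/- Let α : ℝ → R⁵₂ be the curve α(s) = ((s − s⁵)/(4√15), (s² + s⁴)/(4√6), s³/6, (s² − s⁴)/(4√6), (s + s⁵)/(4√15)). Then for all s ∈ ℝ: α⁽⁶⁾(s) = 0; ⟨α′,α′⟩ = 0, ⟨α″,α″⟩ = 0, ⟨α′,α″⟩ = 0, ⟨α′,α‴⟩ = 0, ⟨α″,α‴⟩ = 0, ⟨α‴,α‴⟩ = 1, ⟨α⁽⁴⁾,α⁽⁴⁾⟩ = 0, ⟨α⁽⁵⁾,α⁽⁵⁾⟩ = 0, ⟨α‴,α⁽⁴⁾⟩ = 0, ⟨α‴,α⁽⁵⁾⟩ = 0, ⟨α⁽⁴⁾,α⁽⁵⁾⟩ = 0, ⟨α′,α⁽⁴⁾⟩ = 0, ⟨α″,α⁽⁵⁾⟩ = 0, ⟨α′,α⁽⁵⁾⟩ = 1 and ⟨α″,α⁽⁴⁾⟩ = −1. Consequently the fields L₁ = α′, L₂ = α″, W₃ = α‴, N₂ = α⁽⁴⁾, N₁ = α⁽⁵⁾ form a Cartan frame of α satisfying the Cartan equations with curvatures k₁ = k₂ = 0. -/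

import Mathlib

/-- The index-two pseudo-Euclidean inner product on `ℝⁿ`:
`⟨x,y⟩ = -x¹y¹ - x²y² + x³y³ + ⋯ + xⁿyⁿ`. -/
def mInner {n : ℕ} (x y : Fin n → ℝ) : ℝ :=
  ∑ i : Fin n, (if i.val < 2 then (-1 : ℝ) else 1) * x i * y i

noncomputable def bcA0 (s : ℝ) : Fin 5 → ℝ :=
  ![(s - s^5) / (4 * Real.sqrt 15), (s^2 + s^4) / (4 * Real.sqrt 6),
    s^3 / 6, (s^2 - s^4) / (4 * Real.sqrt 6), (s + s^5) / (4 * Real.sqrt 15)]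

noncomputable def bcA1 (s : ℝ) : Fin 5 → ℝ :=
  ![(1 - 5*s^4) / (4 * Real.sqrt 15), (2*s + 4*s^3) / (4 * Real.sqrt 6),
    s^2 / 2, (2*s - 4*s^3) / (4 * Real.sqrt 6), (1 + 5*s^4) / (4 * Real.sqrt 15)]

noncomputable def bcA2 (s : ℝ) : Fin 5 → ℝ :=
  ![(-(20*s^3)) / (4 * Real.sqrt 15), (2 + 12*s^2) / (4 * Real.sqrt 6),
    s, (2 - 12*s^2) / (4 * Real.sqrt 6), (20*s^3) / (4 * Real.sqrt 15)]

noncomputable def bcA3 (s : ℝ) : Fin 5 → ℝ :=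
  ![(-(60*s^2)) / (4 * Real.sqrt 15), (24*s) / (4 * Real.sqrt 6),
    1, (-(24*s)) / (4 * Real.sqrt 6), (60*s^2) / (4 * Real.sqrt 15)]

noncomputable def bcA4 (s : ℝ) : Fin 5 → ℝ :=
  ![(-(120*s)) / (4 * Real.sqrt 15), 24 / (4 * Real.sqrt 6),
    0, (-24) / (4 * Real.sqrt 6), (120*s) / (4 * Real.sqrt 15)]

noncomputable def bcA5 (_s : ℝ) : Fin 5 → ℝ :=
  ![(-120) / (4 * Real.sqrt 15), 0, 0, (0:ℝ), 120 / (4 * Real.sqrt 15)]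

lemma bcHD01 (s : ℝ) : HasDerivAt bcA0 (bcA1 s) s := by
  have h0 : HasDerivAt (fun x : ℝ => (x - x^5) / (4 * Real.sqrt 15))
      ((1 - 5*s^4) / (4 * Real.sqrt 15)) s := by
    have h := ((hasDerivAt_id' (x := s)).sub (hasDerivAt_pow 5 s)).div_const (4 * Real.sqrt 15)
    convert h using 1
    all_goals first | rfl | (funext x; simp) | (push_cast; ring)
  have h1 : HasDerivAt (fun x : ℝ => (x^2 + x^4) / (4 * Real.sqrt 6))
      ((2*s + 4*s^3) / (4 * Real.sqrt 6)) s := by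
    have h := ((hasDerivAt_pow 2 s).add (hasDerivAt_pow 4 s)).div_const (4 * Real.sqrt 6)
    convert h using 1
    all_goals first | rfl | (funext x; simp) | (push_cast; ring)
  have h2 : HasDerivAt (fun x : ℝ => x^3 / 6) (s^2 / 2) s := by
    have h := (hasDerivAt_pow 3 s).div_const 6
    convert h using 1
    all_goals first | rfl | (funext x; simp) | (push_cast; ring)
  have h3 : HasDerivAt (fun x : ℝ => (x^2 - x^4) / (4 * Real.sqrt 6))
      ((2*s - 4*s^3) / (4 * Real.sqrt 6)) s := by
    have h := ((hasDerivAt_pow 2 s).sub (hasDerivAt_pow 4 s)).div_const (4 * Real.sqrt 6)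
    convert h using 1
    all_goals first | rfl | (funext x; simp) | (push_cast; ring)
  have h4 : HasDerivAt (fun x : ℝ => (x + x^5) / (4 * Real.sqrt 15))
      ((1 + 5*s^4) / (4 * Real.sqrt 15)) s := by
    have h := ((hasDerivAt_id' (x := s)).add (hasDerivAt_pow 5 s)).div_const (4 * Real.sqrt 15)
    convert h using 1
    all_goals first | rfl | (funext x; simp) | (push_cast; ring)
  rw [hasDerivAt_pi]
  intro i
  fin_cases i
  · simpa only [bcA0, bcA1, Matrix.cons_val_zero, Fin.zero_eta] using h0
  · simpa only [bcA0, bcA1, Fin.mk_one, Matrix.cons_val_one, Matrix.cons_val_zero, Matrix.head_cons] using h1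
  · simpa only [bcA0, bcA1, Fin.reduceFinMk, Matrix.cons_val_two, Matrix.tail_cons, Matrix.head_cons] using h2
  · simpa only [bcA0, bcA1, Fin.reduceFinMk, Matrix.cons_val_three, Matrix.tail_cons, Matrix.head_cons] using h3
  · simpa only [bcA0, bcA1, Fin.reduceFinMk, Matrix.cons_val_four, Matrix.tail_cons, Matrix.head_cons] using h4

lemma bcHD12 (s : ℝ) : HasDerivAt bcA1 (bcA2 s) s := by
  have h0 : HasDerivAt (fun x : ℝ => (1 - 5*x^4) / (4 * Real.sqrt 15))
      ((-(20*s^3)) / (4 * Real.sqrt 15)) s := by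
    have h := ((hasDerivAt_const s (1:ℝ)).sub
      ((hasDerivAt_pow 4 s).const_mul (5:ℝ))).div_const (4 * Real.sqrt 15)
    convert h using 1
    all_goals first | rfl | (funext x; simp) | (push_cast; ring)
  have h1 : HasDerivAt (fun x : ℝ => (2*x + 4*x^3) / (4 * Real.sqrt 6))
      ((2 + 12*s^2) / (4 * Real.sqrt 6)) s := by
    have h := (((hasDerivAt_id' (x := s)).const_mul (2:ℝ)).add
      ((hasDerivAt_pow 3 s).const_mul (4:ℝ))).div_const (4 * Real.sqrt 6)
    convert h using 1
    all_goals first | rfl | (funext x; simp) | (push_cast; ring)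
  have h2 : HasDerivAt (fun x : ℝ => x^2 / 2) s s := by
    have h := (hasDerivAt_pow 2 s).div_const 2
    convert h using 1
    all_goals first | rfl | (funext x; simp) | (push_cast; ring)
  have h3 : HasDerivAt (fun x : ℝ => (2*x - 4*x^3) / (4 * Real.sqrt 6))
      ((2 - 12*s^2) / (4 * Real.sqrt 6)) s := by
    have h := (((hasDerivAt_id' (x := s)).const_mul (2:ℝ)).sub
      ((hasDerivAt_pow 3 s).const_mul (4:ℝ))).div_const (4 * Real.sqrt 6)
    convert h using 1
    all_goals first | rfl | (funext x; simp) | (push_cast; ring)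
  have h4 : HasDerivAt (fun x : ℝ => (1 + 5*x^4) / (4 * Real.sqrt 15))
      ((20*s^3) / (4 * Real.sqrt 15)) s := by
    have h := ((hasDerivAt_const s (1:ℝ)).add
      ((hasDerivAt_pow 4 s).const_mul (5:ℝ))).div_const (4 * Real.sqrt 15)
    convert h using 1
    all_goals first | rfl | (funext x; simp) | (push_cast; ring)
  rw [hasDerivAt_pi]
  intro i
  fin_cases i
  · simpa only [bcA1, bcA2, Matrix.cons_val_zero, Fin.zero_eta] using h0
  · simpa only [bcA1, bcA2, Fin.mk_one, Matrix.cons_val_one, Matrix.cons_val_zero, Matrix.head_cons] using h1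
  · simpa only [bcA1, bcA2, Fin.reduceFinMk, Matrix.cons_val_two, Matrix.tail_cons, Matrix.head_cons] using h2
  · simpa only [bcA1, bcA2, Fin.reduceFinMk, Matrix.cons_val_three, Matrix.tail_cons, Matrix.head_cons] using h3
  · simpa only [bcA1, bcA2, Fin.reduceFinMk, Matrix.cons_val_four, Matrix.tail_cons, Matrix.head_cons] using h4

lemma bcHD23 (s : ℝ) : HasDerivAt bcA2 (bcA3 s) s := by
  have h0 : HasDerivAt (fun x : ℝ => (-(20*x^3)) / (4 * Real.sqrt 15))
      ((-(60*s^2)) / (4 * Real.sqrt 15)) s := by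
    have h := (((hasDerivAt_pow 3 s).const_mul (20:ℝ)).neg).div_const (4 * Real.sqrt 15)
    convert h using 1
    all_goals first | rfl | (funext x; simp) | (push_cast; ring)
  have h1 : HasDerivAt (fun x : ℝ => (2 + 12*x^2) / (4 * Real.sqrt 6))
      ((24*s) / (4 * Real.sqrt 6)) s := by
    have h := ((hasDerivAt_const s (2:ℝ)).add
      ((hasDerivAt_pow 2 s).const_mul (12:ℝ))).div_const (4 * Real.sqrt 6)
    convert h using 1
    all_goals first | rfl | (funext x; simp) | (push_cast; ring)
  have h2 : HasDerivAt (fun x : ℝ => x) (1:ℝ) s := hasDerivAt_id' (x := s)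
  have h3 : HasDerivAt (fun x : ℝ => (2 - 12*x^2) / (4 * Real.sqrt 6))
      ((-(24*s)) / (4 * Real.sqrt 6)) s := by
    have h := ((hasDerivAt_const s (2:ℝ)).sub
      ((hasDerivAt_pow 2 s).const_mul (12:ℝ))).div_const (4 * Real.sqrt 6)
    convert h using 1
    all_goals first | rfl | (funext x; simp) | (push_cast; ring)
  have h4 : HasDerivAt (fun x : ℝ => (20*x^3) / (4 * Real.sqrt 15))
      ((60*s^2) / (4 * Real.sqrt 15)) s := by
    have h := ((hasDerivAt_pow 3 s).const_mul (20:ℝ)).div_const (4 * Real.sqrt 15)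
    convert h using 1
    all_goals first | rfl | (funext x; simp) | (push_cast; ring)
  rw [hasDerivAt_pi]
  intro i
  fin_cases i
  · simpa only [bcA2, bcA3, Matrix.cons_val_zero, Fin.zero_eta] using h0
  · simpa only [bcA2, bcA3, Fin.mk_one, Matrix.cons_val_one, Matrix.cons_val_zero, Matrix.head_cons] using h1
  · simpa only [bcA2, bcA3, Fin.reduceFinMk, Matrix.cons_val_two, Matrix.tail_cons, Matrix.head_cons] using h2
  · simpa only [bcA2, bcA3, Fin.reduceFinMk, Matrix.cons_val_three, Matrix.tail_cons, Matrix.head_cons] using h3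
  · simpa only [bcA2, bcA3, Fin.reduceFinMk, Matrix.cons_val_four, Matrix.tail_cons, Matrix.head_cons] using h4

lemma bcHD34 (s : ℝ) : HasDerivAt bcA3 (bcA4 s) s := by
  have h0 : HasDerivAt (fun x : ℝ => (-(60*x^2)) / (4 * Real.sqrt 15))
      ((-(120*s)) / (4 * Real.sqrt 15)) s := by
    have h := (((hasDerivAt_pow 2 s).const_mul (60:ℝ)).neg).div_const (4 * Real.sqrt 15)
    convert h using 1
    all_goals first | rfl | (funext x; simp) | (push_cast; ring)
  have h1 : HasDerivAt (fun x : ℝ => (24*x) / (4 * Real.sqrt 6))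
      ((24:ℝ) / (4 * Real.sqrt 6)) s := by
    have h := ((hasDerivAt_id' (x := s)).const_mul (24:ℝ)).div_const (4 * Real.sqrt 6)
    convert h using 1
    all_goals first | rfl | (funext x; simp) | (push_cast; ring)
  have h2 : HasDerivAt (fun _x : ℝ => (1:ℝ)) (0:ℝ) s := hasDerivAt_const s 1
  have h3 : HasDerivAt (fun x : ℝ => (-(24*x)) / (4 * Real.sqrt 6))
      ((-24:ℝ) / (4 * Real.sqrt 6)) s := by
    have h := (((hasDerivAt_id' (x := s)).const_mul (24:ℝ)).neg).div_const (4 * Real.sqrt 6)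
    convert h using 1
    all_goals first | rfl | (funext x; simp) | (push_cast; ring)
  have h4 : HasDerivAt (fun x : ℝ => (60*x^2) / (4 * Real.sqrt 15))
      ((120*s) / (4 * Real.sqrt 15)) s := by
    have h := ((hasDerivAt_pow 2 s).const_mul (60:ℝ)).div_const (4 * Real.sqrt 15)
    convert h using 1
    all_goals first | rfl | (funext x; simp) | (push_cast; ring)
  rw [hasDerivAt_pi]
  intro i
  fin_cases i
  · simpa only [bcA3, bcA4, Matrix.cons_val_zero, Fin.zero_eta] using h0
  · simpa only [bcA3, bcA4, Fin.mk_one, Matrix.cons_val_one, Matrix.cons_val_zero, Matrix.head_cons] using h1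
  · simpa only [bcA3, bcA4, Fin.reduceFinMk, Matrix.cons_val_two, Matrix.tail_cons, Matrix.head_cons] using h2
  · simpa only [bcA3, bcA4, Fin.reduceFinMk, Matrix.cons_val_three, Matrix.tail_cons, Matrix.head_cons] using h3
  · simpa only [bcA3, bcA4, Fin.reduceFinMk, Matrix.cons_val_four, Matrix.tail_cons, Matrix.head_cons] using h4

lemma bcHD45 (s : ℝ) : HasDerivAt bcA4 (bcA5 s) s := by
  have h0 : HasDerivAt (fun x : ℝ => (-(120*x)) / (4 * Real.sqrt 15))
      ((-120:ℝ) / (4 * Real.sqrt 15)) s := by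
    have h := (((hasDerivAt_id' (x := s)).const_mul (120:ℝ)).neg).div_const (4 * Real.sqrt 15)
    convert h using 1
    all_goals first | rfl | (funext x; simp) | (push_cast; ring)
  have h1 : HasDerivAt (fun _x : ℝ => (24:ℝ) / (4 * Real.sqrt 6)) (0:ℝ) s := hasDerivAt_const s _
  have h2 : HasDerivAt (fun _x : ℝ => (0:ℝ)) (0:ℝ) s := hasDerivAt_const s 0
  have h3 : HasDerivAt (fun _x : ℝ => (-24:ℝ) / (4 * Real.sqrt 6)) (0:ℝ) s := hasDerivAt_const s _
  have h4 : HasDerivAt (fun x : ℝ => (120*x) / (4 * Real.sqrt 15))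
      ((120:ℝ) / (4 * Real.sqrt 15)) s := by
    have h := ((hasDerivAt_id' (x := s)).const_mul (120:ℝ)).div_const (4 * Real.sqrt 15)
    convert h using 1
    all_goals first | rfl | (funext x; simp) | (push_cast; ring)
  rw [hasDerivAt_pi]
  intro i
  fin_cases i
  · simpa only [bcA4, bcA5, Matrix.cons_val_zero, Fin.zero_eta] using h0
  · simpa only [bcA4, bcA5, Fin.mk_one, Matrix.cons_val_one, Matrix.cons_val_zero, Matrix.head_cons] using h1
  · simpa only [bcA4, bcA5, Fin.reduceFinMk, Matrix.cons_val_two, Matrix.tail_cons, Matrix.head_cons] using h2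
  · simpa only [bcA4, bcA5, Fin.reduceFinMk, Matrix.cons_val_three, Matrix.tail_cons, Matrix.head_cons] using h3
  · simpa only [bcA4, bcA5, Fin.reduceFinMk, Matrix.cons_val_four, Matrix.tail_cons, Matrix.head_cons] using h4

set_option maxHeartbeats 2000000 in
/-- **The example of a Bertrand curve in R⁵₂.**
For the null curve
`α(s) = ((s-s⁵)/(4√15), (s²+s⁴)/(4√6), s³/6, (s²-s⁴)/(4√6), (s+s⁵)/(4√15))`,
the 6th derivative vanishes and the derivatives `α′, α″, α‴, α⁽⁴⁾, α⁽⁵⁾` satisfy exactly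
the metric relations of a Cartan frame `L₁ = α′, L₂ = α″, W₃ = α‴, N₂ = α⁽⁴⁾, N₁ = α⁽⁵⁾`
with curvatures `k₁ = k₂ = 0`. -/
theorem example_bertrand_curve
    (α : ℝ → Fin 5 → ℝ)
    (hα : ∀ s : ℝ, α s =
      ![(s - s^5) / (4 * Real.sqrt 15),
        (s^2 + s^4) / (4 * Real.sqrt 6),
        s^3 / 6,
        (s^2 - s^4) / (4 * Real.sqrt 6),
        (s + s^5) / (4 * Real.sqrt 15)]) :
    ∀ s : ℝ,
      deriv^[6] α s = 0 ∧
      mInner (deriv α s) (deriv α s) = 0 ∧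
      mInner (deriv^[2] α s) (deriv^[2] α s) = 0 ∧
      mInner (deriv α s) (deriv^[2] α s) = 0 ∧
      mInner (deriv α s) (deriv^[3] α s) = 0 ∧
      mInner (deriv^[2] α s) (deriv^[3] α s) = 0 ∧
      mInner (deriv^[3] α s) (deriv^[3] α s) = 1 ∧
      mInner (deriv^[4] α s) (deriv^[4] α s) = 0 ∧
      mInner (deriv^[5] α s) (deriv^[5] α s) = 0 ∧
      mInner (deriv^[3] α s) (deriv^[4] α s) = 0 ∧
      mInner (deriv^[3] α s) (deriv^[5] α s) = 0 ∧
      mInner (deriv^[4] α s) (deriv^[5] α s) = 0 ∧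
      mInner (deriv α s) (deriv^[4] α s) = 0 ∧
      mInner (deriv^[2] α s) (deriv^[5] α s) = 0 ∧
      mInner (deriv α s) (deriv^[5] α s) = 1 ∧
      mInner (deriv^[2] α s) (deriv^[4] α s) = -1 := by
  have e0 : α = bcA0 := funext fun s => hα s
  have e1 : deriv α = bcA1 := by
    funext t; rw [e0]; exact (bcHD01 t).deriv
  have e2 : deriv^[2] α = bcA2 := by
    rw [show deriv^[2] α = deriv (deriv α) from rfl, e1]
    funext t; exact (bcHD12 t).deriv
  have e3 : deriv^[3] α = bcA3 := by
    rw [show deriv^[3] α = deriv (deriv^[2] α) from Function.iterate_succ_apply' deriv 2 α, e2]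
    funext t; exact (bcHD23 t).deriv
  have e4 : deriv^[4] α = bcA4 := by
    rw [show deriv^[4] α = deriv (deriv^[3] α) from Function.iterate_succ_apply' deriv 3 α, e3]
    funext t; exact (bcHD34 t).deriv
  have e5 : deriv^[5] α = bcA5 := by
    rw [show deriv^[5] α = deriv (deriv^[4] α) from Function.iterate_succ_apply' deriv 4 α, e4]
    funext t; exact (bcHD45 t).deriv
  have e6 : deriv^[6] α = fun _ => 0 := by
    rw [show deriv^[6] α = deriv (deriv^[5] α) from Function.iterate_succ_apply' deriv 5 α, e5]
    have hc : bcA5 = fun _ : ℝ => bcA5 0 := by funext t; rfl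
    funext t
    rw [hc]
    exact deriv_const t _
  intro s
  have h15 : Real.sqrt 15 ^ 2 = 15 := Real.sq_sqrt (by norm_num)
  have h6 : Real.sqrt 6 ^ 2 = 6 := Real.sq_sqrt (by norm_num)
  have h15' : Real.sqrt 15 ^ 4 = 225 := by
    rw [show Real.sqrt 15 ^ 4 = (Real.sqrt 15 ^ 2)^2 by ring, h15]; norm_num
  have h6' : Real.sqrt 6 ^ 4 = 36 := by
    rw [show Real.sqrt 6 ^ 4 = (Real.sqrt 6 ^ 2)^2 by ring, h6]; norm_num
  have hr0 : Real.sqrt 15 ≠ 0 := by positivity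
  have hq0 : Real.sqrt 6 ≠ 0 := by positivity
  rw [e1, e2, e3, e4, e5, e6]
  refine ⟨rfl, ?_, ?_, ?_, ?_, ?_, ?_, ?_, ?_, ?_, ?_, ?_, ?_, ?_, ?_, ?_⟩
  all_goals
    simp (config := { decide := true })
      [mInner, Fin.sum_univ_five, bcA1, bcA2, bcA3, bcA4, bcA5]
  all_goals try field_simp
  all_goals try ring_nf
  all_goals try simp [h15, h6, h15', h6']
  all_goals try ring_nf
  all_goals try norm_num
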